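/- Principle of optimality (tail optimality): if π* = (α_1,…,α_K) is an optimal policy for the problem starting at stage 1 from state z, then for any stage k₀ and any state z' reachable with positive probability at stage k₀ under π* from z, the truncated policy (α_{k₀},…,α_K) is optimal for the problem starting at stage k₀ from z'. -/

import Mathlib

noncomputable def ecostK {Z A Ω : Type} [Fintype Ω] (h : Z → A → Ω → Z)
    (l : Z → A → Ω → ℝ) (p : Ω → ℝ) (φ : Z → ℝ) (π : ℕ → Z → A) :
    ℕ → ℕ → Z → ℝ
  | _, 0, z => φ z
  | k, n + 1, z => ∑ ω, p ω * (l z (π k z) ω +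
      ecostK h l p φ π (k + 1) n (h z (π k z) ω))

noncomputable def reachP {Z A Ω : Type} [Fintype Ω] [DecidableEq Z]
    (h : Z → A → Ω → Z) (p : Ω → ℝ) (π : ℕ → Z → A) : ℕ → ℕ → Z → Z → ℝ
  | _, 0, z, z' => if z = z' then 1 else 0
  | k, m + 1, z, z' => ∑ ω, p ω * reachP h p π (k + 1) m (h z (π k z) ω) z'

set_option linter.unusedSectionVars false
section Aux
variable {Z A Ω : Type} [Fintype Ω] [DecidableEq Z]
variable (Aset : Z → Finset A) (hA : ∀ z, (Aset z).Nonempty)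
variable (h : Z → A → Ω → Z) (l : Z → A → Ω → ℝ) (p : Ω → ℝ) (φ : Z → ℝ)

lemma reachP_nonneg (π : ℕ → Z → A) (hp : ∀ ω, 0 ≤ p ω) :
    ∀ (m k : ℕ) (z z' : Z), 0 ≤ reachP h p π k m z z'
  | 0, k, z, z' => by simp only [reachP]; split <;> norm_num
  | m + 1, k, z, z' => by
      simp only [reachP]
      exact Finset.sum_nonneg fun ω _ =>
        mul_nonneg (hp ω) (reachP_nonneg π hp m _ _ _)

lemma ecostK_congr (π τ : ℕ → Z → A) :
    ∀ (n k : ℕ), (∀ j, j < n → π (k + j) = τ (k + j)) →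
      ∀ z, ecostK h l p φ π k n z = ecostK h l p φ τ k n z
  | 0, k, _, z => rfl
  | n + 1, k, hag, z => by
      have h0 : π k = τ k := by simpa using hag 0 (by omega)
      simp only [ecostK, h0]
      refine Finset.sum_congr rfl fun ω _ => ?_
      rw [ecostK_congr π τ n (k + 1)
        (fun j hj => by have := hag (j + 1) (by omega); rwa [show k + (j+1) = k + 1 + j by omega] at this) _]

noncomputable def Vf : ℕ → Z → ℝ
  | 0, z => φ z
  | n + 1, z => (Aset z).inf' (hA z) fun a =>
      ∑ ω, p ω * (l z a ω + Vf n (h z a ω))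

lemma Vf_le (hp : ∀ ω, 0 ≤ p ω) (π : ℕ → Z → A) (hadm : ∀ k z', π k z' ∈ Aset z') :
    ∀ (n k : ℕ) (z : Z), Vf Aset hA h l p φ n z ≤ ecostK h l p φ π k n z
  | 0, k, z => le_refl _
  | n + 1, k, z => by
      simp only [Vf, ecostK]
      refine le_trans (Finset.inf'_le _ (hadm k z)) ?_
      refine Finset.sum_le_sum fun ω _ => ?_
      exact mul_le_mul_of_nonneg_left (by
        exact add_le_add_right (Vf_le hp π hadm n (k+1) _) _) (hp ω)

noncomputable def sigmaPol (K : ℕ) (k : ℕ) (z : Z) : A :=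
  (Finset.exists_mem_eq_inf' (hA z) fun a =>
    ∑ ω, p ω * (l z a ω + Vf Aset hA h l p φ (K - k) (h z a ω))).choose

lemma sigmaPol_mem (K k : ℕ) (z : Z) : sigmaPol Aset hA h l p φ K k z ∈ Aset z :=
  (Finset.exists_mem_eq_inf' (hA z) fun a =>
    ∑ ω, p ω * (l z a ω + Vf Aset hA h l p φ (K - k) (h z a ω))).choose_spec.1

lemma sigmaPol_spec (K k : ℕ) (z : Z) :
    ((Aset z).inf' (hA z) fun a =>
      ∑ ω, p ω * (l z a ω + Vf Aset hA h l p φ (K - k) (h z a ω))) =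
    ∑ ω, p ω * (l z (sigmaPol Aset hA h l p φ K k z) ω +
      Vf Aset hA h l p φ (K - k) (h z (sigmaPol Aset hA h l p φ K k z) ω)) :=
  (Finset.exists_mem_eq_inf' (hA z) fun a =>
    ∑ ω, p ω * (l z a ω + Vf Aset hA h l p φ (K - k) (h z a ω))).choose_spec.2

lemma sigmaPol_ecost (K : ℕ) :
    ∀ (n k : ℕ), k + n = K + 1 → ∀ z,
      ecostK h l p φ (sigmaPol Aset hA h l p φ K) k n z = Vf Aset hA h l p φ n z
  | 0, k, _, z => rfl
  | n + 1, k, hk, z => by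
      have hKk : K - k = n := by omega
      simp only [ecostK]
      have : ∀ ω, ecostK h l p φ (sigmaPol Aset hA h l p φ K) (k+1) n
          (h z (sigmaPol Aset hA h l p φ K k z) ω) =
          Vf Aset hA h l p φ n (h z (sigmaPol Aset hA h l p φ K k z) ω) :=
        fun ω => sigmaPol_ecost K n (k+1) (by omega) _
      simp only [this]
      have := sigmaPol_spec Aset hA h l p φ K k z
      rw [hKk] at this
      simp only [Vf, hKk, this]

lemma key_le (hp : ∀ ω, 0 ≤ p ω) (π τ : ℕ → Z → A) :
    ∀ (m k n : ℕ), (∀ j, j < m → τ (k + j) = π (k + j)) →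
      (∀ w, ecostK h l p φ τ (k + m) n w ≤ ecostK h l p φ π (k + m) n w) →
      ∀ z, ecostK h l p φ τ k (m + n) z ≤ ecostK h l p φ π k (m + n) z
  | 0, k, n, _, hpt, z => by simpa using hpt z
  | m + 1, k, n, hag, hpt, z => by
      have hmn : m + 1 + n = (m + n) + 1 := by omega
      rw [hmn]
      have h0 : τ k = π k := by simpa using hag 0 (by omega)
      simp only [ecostK, h0]
      refine Finset.sum_le_sum fun ω _ => ?_
      refine mul_le_mul_of_nonneg_left (add_le_add_right ?_ _) (hp ω)
      refine key_le hp π τ m (k + 1) n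
        (fun j hj => by have := hag (j+1) (by omega); rwa [show k + (j+1) = k+1+j by omega] at this)
        (fun w => by have := hpt w; rwa [show k + (m+1) = k+1+m by omega] at this) _

lemma key_lt (hp : ∀ ω, 0 ≤ p ω) (π τ : ℕ → Z → A) :
    ∀ (m k n : ℕ), (∀ j, j < m → τ (k + j) = π (k + j)) →
      (∀ w, ecostK h l p φ τ (k + m) n w ≤ ecostK h l p φ π (k + m) n w) →
      ∀ z z', 0 < reachP h p π k m z z' →
      ecostK h l p φ τ (k + m) n z' < ecostK h l p φ π (k + m) n z' →
      ecostK h l p φ τ k (m + n) z < ecostK h l p φ π k (m + n) z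
  | 0, k, n, _, hpt, z, z', hr, hlt => by
      have hz : z = z' := by
        by_contra hne
        simp [reachP, hne] at hr
      subst hz
      simpa using hlt
  | m + 1, k, n, hag, hpt, z, z', hr, hlt => by
      have hmn : m + 1 + n = (m + n) + 1 := by omega
      rw [hmn]
      have h0 : τ k = π k := by simpa using hag 0 (by omega)
      simp only [ecostK, h0]
      -- find ω with positive prob and positive reach
      simp only [reachP] at hr
      have hr' : ∑ _ω : Ω, (0:ℝ) < ∑ ω, p ω * reachP h p π (k + 1) m (h z (π k z) ω) z' := by
        simpa using hr
      obtain ⟨ω0, -, hω0⟩ := Finset.exists_lt_of_sum_lt hr'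
      obtain ⟨hpω, hrω⟩ : 0 < p ω0 ∧ 0 < reachP h p π (k + 1) m (h z (π k z) ω0) z' := by
        rcases mul_pos_iff.mp hω0 with h' | h'
        · exact h'
        · exact absurd h'.1 (not_lt.mpr (hp ω0))
      have hag' : ∀ j, j < m → τ (k + 1 + j) = π (k + 1 + j) := fun j hj => by
        have := hag (j+1) (by omega); rwa [show k + (j+1) = k+1+j by omega] at this
      have hpt' : ∀ w, ecostK h l p φ τ (k + 1 + m) n w ≤ ecostK h l p φ π (k + 1 + m) n w :=
        fun w => by have := hpt w; rwa [show k + (m+1) = k+1+m by omega] at this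
      have hlt' : ecostK h l p φ τ (k + 1 + m) n z' < ecostK h l p φ π (k + 1 + m) n z' := by
        have := hlt; rwa [show k + (m+1) = k+1+m by omega] at this
      refine Finset.sum_lt_sum (fun ω _ => ?_) ⟨ω0, Finset.mem_univ _, ?_⟩
      · exact mul_le_mul_of_nonneg_left (add_le_add_right
          (key_le h l p φ hp π τ m (k+1) n hag' hpt' _) _) (hp ω)
      · exact mul_lt_mul_of_pos_left (add_lt_add_right
          (key_lt hp π τ m (k+1) n hag' hpt' _ _ hrω hlt') _) hpω

end Aux

/-- Principle of optimality: the tail of an optimal policy is optimal at any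
state reachable with positive probability. -/
theorem stmt13 {Z A Ω : Type} [Fintype Ω] [DecidableEq Z]
    (Aset : Z → Finset A) (hA : ∀ z, (Aset z).Nonempty)
    (h : Z → A → Ω → Z) (l : Z → A → Ω → ℝ) (p : Ω → ℝ) (φ : Z → ℝ)
    (hp : ∀ ω, 0 ≤ p ω) (hps : ∑ ω, p ω = 1)
    (K : ℕ) (z : Z) (πs : ℕ → Z → A) (hadm : ∀ k z', πs k z' ∈ Aset z')
    (hopt : ∀ π : ℕ → Z → A, (∀ k z', π k z' ∈ Aset z') →
      ecostK h l p φ πs 1 K z ≤ ecostK h l p φ π 1 K z)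
    (m : ℕ) (hm : m ≤ K) (z' : Z) (hreach : 0 < reachP h p πs 1 m z z') :
    ∀ π : ℕ → Z → A, (∀ k z'', π k z'' ∈ Aset z'') →
      ecostK h l p φ πs (1 + m) (K - m) z' ≤
        ecostK h l p φ π (1 + m) (K - m) z' := by
  intro π hπ
  set n := K - m with hn
  have hVle : Vf Aset hA h l p φ n z' ≤ ecostK h l p φ π (1 + m) n z' :=
    Vf_le Aset hA h l p φ hp π hπ n (1 + m) z'
  refine le_trans ?_ hVle
  by_contra hc
  push_neg at hc
  set π' : ℕ → Z → A := fun k => if k < 1 + m then πs k else sigmaPol Aset hA h l p φ K k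
    with hπ'
  have hπ'adm : ∀ k z'', π' k z'' ∈ Aset z'' := fun k z'' => by
    by_cases hk : k < 1 + m <;> simp [hπ', hk, hadm, sigmaPol_mem]
  have htail : ∀ w, ecostK h l p φ π' (1 + m) n w = Vf Aset hA h l p φ n w := fun w => by
    rw [ecostK_congr h l p φ π' (sigmaPol Aset hA h l p φ K) n (1 + m)
      (fun j hj => by simp [hπ', show ¬(1 + m + j < 1 + m) by omega])]
    exact sigmaPol_ecost Aset hA h l p φ K n (1 + m) (by omega) w
  have hlt : ecostK h l p φ π' 1 (m + n) z < ecostK h l p φ πs 1 (m + n) z := by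
    refine key_lt h l p φ hp πs π' m 1 n
      (fun j hj => by simp [hπ', show 1 + j < 1 + m by omega]) ?_ z z' hreach ?_
    · intro w
      rw [htail w]
      exact Vf_le Aset hA h l p φ hp πs hadm n (1 + m) w
    · rw [htail z']; exact hc
  rw [show m + n = K by omega] at hlt
  exact absurd (hopt π' hπ'adm) (not_le.mpr hlt)
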